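/- Suppose Σ⁻¹ = V S₁ Vᵀ and Σ_a = Ṽ S₂ Ṽᵀ with V, Ṽ ∈ ℝ^{d×d} orthogonal, S₁ = Diag(s_i²/σ² + 1 for i ≤ d_y, 1 otherwise), S₂ = Diag(σ²/(s̃_i²+σ²) for i ≤ d_y, 1 otherwise), and the diagonal of Δ := VᵀṼ − I bounded by ε (neglecting the second-order term tr(S₁ Δ S₂ Δᵀ)). Then tr(Σ⁻¹ Σ_a) − d ≤ (1+2ε) Σ_{i≤d_y} (s_i² − s̃_i²)/(s̃_i² + σ²) + 2εd. -/

import Mathlib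

open Matrix

/-- Trace bound for `tr(Σ⁻¹ Σ_a) − d` in the general setting, neglecting the
second-order term `tr(S₁ Δ S₂ Δᵀ)` in `Δ = Vᵀ Ṽ − I`. -/
theorem trace_bound_approx {d d_y : ℕ} (hd : d_y ≤ d)
    (s st : Fin d → ℝ) (σ ε : ℝ) (hσ : 0 < σ)
    (hs : ∀ i : Fin d, (i : ℕ) < d_y → 0 < s i)
    (hst : ∀ i : Fin d, (i : ℕ) < d_y → 0 < st i)
    (V Vt : Matrix (Fin d) (Fin d) ℝ)
    (hV : Vᵀ * V = 1) (hV' : V * Vᵀ = 1) (hVt : Vtᵀ * Vt = 1) (hVt' : Vt * Vtᵀ = 1)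
    (hdiag : ∀ i, (Vᵀ * Vt) i i ∈ Set.Icc (1 - ε) (1 + ε)) :
    let S₁ : Matrix (Fin d) (Fin d) ℝ :=
      Matrix.diagonal (fun i => if (i : ℕ) < d_y then s i ^ 2 / σ ^ 2 + 1 else 1)
    let S₂ : Matrix (Fin d) (Fin d) ℝ :=
      Matrix.diagonal (fun i => if (i : ℕ) < d_y then σ ^ 2 / (st i ^ 2 + σ ^ 2) else 1)
    let Δ : Matrix (Fin d) (Fin d) ℝ := Vᵀ * Vt - 1
    ((V * S₁ * Vᵀ) * (Vt * S₂ * Vtᵀ)).trace - (S₁ * Δ * S₂ * Δᵀ).trace - d ≤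
      (1 + 2 * ε) *
          ∑ i ∈ Finset.univ.filter (fun i : Fin d => (i : ℕ) < d_y),
            (s i ^ 2 - st i ^ 2) / (st i ^ 2 + σ ^ 2) +
        2 * ε * d := by
  intro S₁ S₂ Δ
  set f : Fin d → ℝ := fun i => if (i : ℕ) < d_y then s i ^ 2 / σ ^ 2 + 1 else 1 with hf
  set g : Fin d → ℝ := fun i => if (i : ℕ) < d_y then σ ^ 2 / (st i ^ 2 + σ ^ 2) else 1 with hg
  set A : Matrix (Fin d) (Fin d) ℝ := Vᵀ * Vt with hA
  have h1 : ((V * S₁ * Vᵀ) * (Vt * S₂ * Vtᵀ)).trace = (S₁ * A * S₂ * Aᵀ).trace := by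
    have e1 : V * S₁ * Vᵀ * (Vt * S₂ * Vtᵀ) = V * (S₁ * A * S₂ * Vtᵀ) := by
      rw [hA]; simp only [mul_assoc]
    rw [e1, trace_mul_comm]
    have e2 : S₁ * A * S₂ * Vtᵀ * V = S₁ * A * S₂ * Aᵀ := by
      rw [mul_assoc, hA, transpose_mul, transpose_transpose]
    rw [e2]
  have hΔ : Δ = A - 1 := rfl
  have expand : S₁ * Δ * S₂ * Δᵀ = S₁ * A * S₂ * Aᵀ - S₁ * A * S₂ - S₁ * S₂ * Aᵀ + S₁ * S₂ := by
    rw [hΔ, transpose_sub, transpose_one]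
    noncomm_ring
  rw [h1, expand]
  simp only [trace_sub, trace_add]
  have t1 : (S₁ * A * S₂).trace = ∑ i, f i * A i i * g i := by
    simp only [Matrix.trace, Matrix.diag, S₁, S₂, Matrix.mul_diagonal, Matrix.diagonal_mul]
    rfl
  have t2 : (S₁ * S₂ * Aᵀ).trace = ∑ i, f i * g i * A i i := by
    rw [show S₁ * S₂ = Matrix.diagonal (fun i => f i * g i) from Matrix.diagonal_mul_diagonal _ _]
    simp only [Matrix.trace, Matrix.diag, Matrix.diagonal_mul, Matrix.transpose_apply]
  have t3 : (S₁ * S₂).trace = ∑ i, f i * g i := by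
    rw [show S₁ * S₂ = Matrix.diagonal (fun i => f i * g i) from Matrix.diagonal_mul_diagonal _ _]
    simp [Matrix.trace, Matrix.diag]
  have main : ∑ i : Fin d, (f i * A i i * g i + f i * g i * A i i - f i * g i - 1) ≤
      ∑ i : Fin d, ((1 + 2 * ε) * (if (i : ℕ) < d_y then (s i ^ 2 - st i ^ 2) / (st i ^ 2 + σ ^ 2) else 0) + 2 * ε) := by
    refine Finset.sum_le_sum fun i _ => ?_
    have hAi := hdiag i
    have hAle : A i i ≤ 1 + ε := hAi.2
    by_cases h : (i : ℕ) < d_y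
    · have hst2 : 0 < st i ^ 2 + σ ^ 2 := by positivity
      have hc : f i * g i = 1 + (s i ^ 2 - st i ^ 2) / (st i ^ 2 + σ ^ 2) := by
        simp only [hf, hg, if_pos h]
        field_simp
        ring
      have hcpos : 0 ≤ f i * g i := by
        rw [hc]
        have : (s i ^ 2 - st i ^ 2) / (st i ^ 2 + σ ^ 2) = (s i ^ 2 + σ ^ 2) / (st i ^ 2 + σ ^ 2) - 1 := by
          field_simp
          ring
        rw [this]
        have : 0 ≤ (s i ^ 2 + σ ^ 2) / (st i ^ 2 + σ ^ 2) := by positivity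
        linarith
      simp only [if_pos h]
      set a : ℝ := (s i ^ 2 - st i ^ 2) / (st i ^ 2 + σ ^ 2)
      have hfa : f i = s i ^ 2 / σ ^ 2 + 1 := by simp [hf, h]
      have hga : g i = σ ^ 2 / (st i ^ 2 + σ ^ 2) := by simp [hg, h]
      have key : f i * A i i * g i + f i * g i * A i i = 2 * (f i * g i) * A i i := by ring
      have h2 : 2 * (f i * g i) * A i i ≤ 2 * (f i * g i) * (1 + ε) := by
        apply mul_le_mul_of_nonneg_left hAle
        linarith
      have h3 : 2 * (f i * g i) * (1 + ε) = 2 + 2 * ε + 2 * a + 2 * (a * ε) := by rw [hc]; ring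
      have h4 : (1 + 2 * ε) * a + 2 * ε = a + 2 * (a * ε) + 2 * ε := by ring
      linarith [key, h2, h3, h4, hc]
    · simp only [hf, hg, if_neg h]
      nlinarith [hAle]

  have split1 : ∑ i : Fin d, (f i * A i i * g i + f i * g i * A i i - f i * g i - 1) =
      (∑ i : Fin d, f i * A i i * g i) + (∑ i : Fin d, f i * g i * A i i) -
        (∑ i : Fin d, f i * g i) - (d : ℝ) := by
    rw [Finset.sum_sub_distrib, Finset.sum_sub_distrib, Finset.sum_add_distrib]
    simp
  have split2 : ∑ i : Fin d, ((1 + 2 * ε) * (if (i : ℕ) < d_y then (s i ^ 2 - st i ^ 2) / (st i ^ 2 + σ ^ 2) else 0) + 2 * ε) =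
      (1 + 2 * ε) * ∑ i ∈ Finset.univ.filter (fun i : Fin d => (i : ℕ) < d_y),
          (s i ^ 2 - st i ^ 2) / (st i ^ 2 + σ ^ 2) + 2 * ε * d := by
    rw [Finset.sum_add_distrib, Finset.sum_filter, Finset.mul_sum]
    simp [mul_comm]
  rw [split1, split2] at main
  linarith [main]
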